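/- Let a, g be locally Lipschitz (control-affine dynamics ẋ = a(x) + g(x)u, u ∈ ℝᵐ) and let V, h be continuously differentiable. Fix x with L_g h(x) ≠ 0 and suppose L_g V(x) = κ L_g h(x) for some κ > 0 and L_a V(x) + W(x) < (L_gV(x)ᵀL_gh(x)/‖L_gh(x)‖²)·(L_a h(x) + α̂), where W(x) ∈ ℝ and α̂ ∈ ℝ with α̂ ≥ 0. Then there exists u ∈ ℝᵐ simultaneously satisfying L_aV(x) + L_gV(x)ᵀu + W(x) ≤ 0 and L_ah(x) + L_gh(x)ᵀu + α̂ ≥ 0. -/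

import Mathlib

/-- Compatibility in the linearly dependent case: if `L_g h(x) ≠ 0`,
`L_g V(x) = κ L_g h(x)` with `κ > 0`, `α̂ ≥ 0`, and
`L_aV + W < (⟨L_gV, L_gh⟩/‖L_gh‖²)(L_ah + α̂)`, then some control `u`
simultaneously satisfies the CLF inequality `L_aV + ⟨L_gV, u⟩ + W ≤ 0` and the
CBF inequality `L_ah + ⟨L_gh, u⟩ + α̂ ≥ 0`. -/
theorem stmt18 (m : ℕ) (LgV Lgh : EuclideanSpace ℝ (Fin m))
    (LaV Lah W αhat κ : ℝ)
    (hLgh : Lgh ≠ 0) (hκ : 0 < κ) (hdep : LgV = κ • Lgh) (hα : 0 ≤ αhat)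
    (hineq : LaV + W <
      ((inner ℝ LgV Lgh : ℝ) / ‖Lgh‖^2) * (Lah + αhat)) :
    ∃ u : EuclideanSpace ℝ (Fin m),
      LaV + (inner ℝ LgV u : ℝ) + W ≤ 0 ∧
      Lah + (inner ℝ Lgh u : ℝ) + αhat ≥ 0 := by
  have hn : (0:ℝ) < ‖Lgh‖^2 := by
    have := norm_pos_iff.mpr hLgh
    positivity
  refine ⟨(-(Lah + αhat) / ‖Lgh‖^2) • Lgh, ?_, ?_⟩
  · have h1 : (inner ℝ LgV Lgh : ℝ) = κ * ‖Lgh‖^2 := by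
      rw [hdep, real_inner_smul_left, real_inner_self_eq_norm_sq]
    rw [hdep]
    rw [real_inner_smul_left, real_inner_smul_right, real_inner_self_eq_norm_sq]
    have := hineq
    rw [h1] at this
    have h2 : κ * ‖Lgh‖^2 / ‖Lgh‖^2 = κ := by field_simp
    rw [h2] at this
    have h3 : -(Lah + αhat) / ‖Lgh‖ ^ 2 * ‖Lgh‖ ^ 2 = -(Lah + αhat) := by
      field_simp
    rw [h3]
    nlinarith
  · rw [real_inner_smul_right, real_inner_self_eq_norm_sq]
    have : -(Lah + αhat) / ‖Lgh‖ ^ 2 * ‖Lgh‖ ^ 2 = -(Lah + αhat) := by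
      field_simp
    rw [this]; linarith
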